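/- Let L be a lexideal in S = K[X_1,...,X_n] containing no power of X_n, let G be its minimal system of monomial generators, and let L̂ be the ideal generated by the binomials {v − φ(v) : v ∈ G}. Then for every monomial u of S there exists a monomial w ∉ L such that u ≡ w (mod L̂); equivalently, the image of the set of all monomials in S/L̂ equals the image of the set of monomials not in L. -/
import Mathlib


/-- The degree of a monomial in `K[X_1,…,X_n]`, encoded as its exponent vector
`σ : Fin n →₀ ℕ` (so `σ` encodes `X_1^{σ 0} ⋯ X_n^{σ (n-1)}`). -/
def mdeg {n : ℕ} (σ : Fin n →₀ ℕ) : ℕ := ∑ j, σ j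

/-- The strict graded lexicographic order on monomials (exponent vectors), for the
variable order `X_1 > ⋯ > X_n` (coordinate `0` corresponds to `X_1`): `u < v` iff
`deg u < deg v`, or the degrees are equal and at the first coordinate where `u, v`
differ, `u` has the smaller exponent. -/
def glexLt {n : ℕ} (u v : Fin n →₀ ℕ) : Prop :=
  mdeg u < mdeg v ∨ (mdeg u = mdeg v ∧ ∃ j : Fin n, u j < v j ∧ ∀ k, k < j → u k = v k)

/-- The graded lexicographic order: `glexLe u v` means `u ≤ v`. -/
def glexLe {n : ℕ} (u v : Fin n →₀ ℕ) : Prop := u = v ∨ glexLt u v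

/-- A lexsegment in degree `i`: a set of monomials of the form `{u ∈ M_i | u ≥ v}`
for some monomial `v` of degree `i`. -/
def IsLexSegment {n : ℕ} (i : ℕ) (C : Set (Fin n →₀ ℕ)) : Prop :=
  ∃ v : Fin n →₀ ℕ, mdeg v = i ∧ C = {u | mdeg u = i ∧ glexLe v u}

/-- A monomial ideal: an ideal generated by monomials. -/
def IsMonomialIdeal {K : Type*} [Field K] {n : ℕ} (J : Ideal (MvPolynomial (Fin n) K)) : Prop :=
  ∃ T : Set (Fin n →₀ ℕ), J = Ideal.span ((fun σ => MvPolynomial.monomial σ (1 : K)) '' T)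

/-- A lexideal: a monomial ideal `L` such that, for every `i ≥ 1` with `L ∩ M_i ≠ ∅`,
the set of degree-`i` monomials of `L` is a lexsegment. -/
def IsLexIdeal {K : Type*} [Field K] {n : ℕ} (L : Ideal (MvPolynomial (Fin n) K)) : Prop :=
  IsMonomialIdeal L ∧ ∀ i : ℕ, 1 ≤ i →
    ({σ : Fin n →₀ ℕ | mdeg σ = i ∧ MvPolynomial.monomial σ (1 : K) ∈ L}).Nonempty →
    IsLexSegment i {σ : Fin n →₀ ℕ | mdeg σ = i ∧ MvPolynomial.monomial σ (1 : K) ∈ L}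

/-- The map `φ : u ↦ u·X_n/X_{min(u)}` on nonconstant monomials, where `min(u)` is the
least index of a variable dividing `u` (and `X_n` is the last variable). On the zero
exponent vector (the monomial `1`), `φ` is the identity by convention. -/
noncomputable def phi {n : ℕ} (hn : 0 < n) (σ : Fin n →₀ ℕ) : Fin n →₀ ℕ :=
  if h : σ.support.Nonempty then
    σ - Finsupp.single (σ.support.min' h) 1 + Finsupp.single ⟨n - 1, Nat.sub_lt hn Nat.one_pos⟩ 1
  else σ

/-- The minimal system of monomial generators of a monomial ideal `L`: the monomials of
`L` that are not of the form `X_j·w` with `w` a monomial of `L`. -/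
def minGens {K : Type*} [Field K] {n : ℕ} (L : Ideal (MvPolynomial (Fin n) K)) :
    Set (Fin n →₀ ℕ) :=
  {σ | MvPolynomial.monomial σ (1 : K) ∈ L ∧
    ¬ ∃ (j : Fin n) (τ : Fin n →₀ ℕ),
        MvPolynomial.monomial τ (1 : K) ∈ L ∧ σ = τ + Finsupp.single j 1}

section Aux

open MvPolynomial

/-- weight measure: replacing `X_min` by `X_n` strictly decreases this. -/
def wt (n : ℕ) (σ : Fin n →₀ ℕ) : ℕ := ∑ j, σ j * (n - 1 - j.val)

lemma wt_add {n : ℕ} (a b : Fin n →₀ ℕ) : wt n (a + b) = wt n a + wt n b := by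
  simp [wt, Finsupp.add_apply, add_mul, Finset.sum_add_distrib]

lemma mdeg_add {n : ℕ} (a b : Fin n →₀ ℕ) : mdeg (a + b) = mdeg a + mdeg b := by
  simp [mdeg, Finsupp.add_apply, Finset.sum_add_distrib]

lemma mdeg_single {n : ℕ} (j : Fin n) (k : ℕ) : mdeg (Finsupp.single j k) = k := by
  simp [mdeg, Finsupp.single_apply]

lemma wt_single {n : ℕ} (j : Fin n) (k : ℕ) :
    wt n (Finsupp.single j k) = k * (n - 1 - j.val) := by
  simp [wt, Finsupp.single_apply, Finset.sum_ite_eq]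

lemma wt_sub_single {n : ℕ} (v : Fin n →₀ ℕ) (m : Fin n) (hm : 1 ≤ v m) :
    wt n (v - Finsupp.single m 1) + (n - 1 - m.val) = wt n v := by
  unfold wt
  simp only [Finsupp.tsub_apply, Finsupp.single_apply]
  rw [← Finset.sum_erase_add _ _ (Finset.mem_univ m),
      ← Finset.sum_erase_add _ _ (Finset.mem_univ m)]
  rw [Finset.sum_congr rfl (fun j hj => by
    rw [if_neg (fun e => (Finset.mem_erase.mp hj).1 e.symm), Nat.sub_zero])]
  rw [if_pos rfl, add_assoc]
  congr 1
  set c := n - 1 - m.val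
  calc (v m - 1) * c + c = (v m - 1 + 1) * c := by ring
    _ = v m * c := by rw [Nat.sub_add_cancel hm]

lemma exists_minGen {K : Type*} [Field K] {n : ℕ} (L : Ideal (MvPolynomial (Fin n) K))
    (σ : Fin n →₀ ℕ) (hσ : MvPolynomial.monomial σ (1 : K) ∈ L) :
    ∃ v ∈ minGens L, ∃ w, σ = v + w := by
  generalize hd : mdeg σ = d
  induction d using Nat.strong_induction_on generalizing σ with
  | _ d ih =>
    by_cases h : σ ∈ minGens L
    · exact ⟨σ, h, 0, (add_zero σ).symm⟩
    · have hx : ∃ (j : Fin n) (τ : Fin n →₀ ℕ),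
          MvPolynomial.monomial τ (1 : K) ∈ L ∧ σ = τ + Finsupp.single j 1 := by
        by_contra hc
        exact h ⟨hσ, hc⟩
      obtain ⟨j, τ, hτ, rfl⟩ := hx
      obtain ⟨v, hv, w, rfl⟩ := ih (mdeg τ)
        (by rw [← hd, mdeg_add, mdeg_single]; omega) τ hτ rfl
      exact ⟨v, hv, w + Finsupp.single j 1, by rw [add_assoc]⟩

end Aux

/-- Let `L` be a lexideal in `S = K[X_1,…,X_n]` containing no power of `X_n`, let `G` be
the minimal system of monomial generators of `L`, and `L̂` the ideal generated by the
binomials `{v − φ(v) : v ∈ G}`. Then for every monomial `u` of `S` there exists a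
monomial `w ∉ L` with `u ≡ w (mod L̂)`, i.e. `u − w ∈ L̂`; equivalently, the image of
the set of all monomials in `S/L̂` equals the image of the set of monomials not in `L`. -/
theorem stmt15 (K : Type*) [Field K] (n : ℕ) (hn : 0 < n)
    (L : Ideal (MvPolynomial (Fin n) K)) (hlex : IsLexIdeal L)
    (hXn : ∀ k : ℕ,
      (MvPolynomial.X (⟨n - 1, Nat.sub_lt hn Nat.one_pos⟩ : Fin n) : MvPolynomial (Fin n) K) ^ k
        ∉ L) :
    ∀ σ : Fin n →₀ ℕ, ∃ τ : Fin n →₀ ℕ,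
      MvPolynomial.monomial τ (1 : K) ∉ L ∧
      MvPolynomial.monomial σ (1 : K) - MvPolynomial.monomial τ (1 : K) ∈
        Ideal.span ((fun v => MvPolynomial.monomial v (1 : K)
          - MvPolynomial.monomial (phi hn v) (1 : K)) '' minGens L) := by
  intro σ
  generalize hN : wt n σ = N
  induction N using Nat.strong_induction_on generalizing σ with
  | _ N ih =>
  by_cases hσ : MvPolynomial.monomial σ (1 : K) ∈ L
  · obtain ⟨v, hv, w, rfl⟩ := exists_minGen L σ hσ
    have hvL : MvPolynomial.monomial v (1 : K) ∈ L := hv.1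
    -- v ≠ 0
    have hsupp : v.support.Nonempty := by
      rw [Finsupp.support_nonempty_iff]
      rintro rfl
      refine hXn 0 ?_
      simpa using hvL
    set m := v.support.min' hsupp with hm
    have hvm : 1 ≤ v m :=
      Nat.one_le_iff_ne_zero.mpr (Finsupp.mem_support_iff.mp (v.support.min'_mem hsupp))
    -- m.val < n - 1
    have hmlt : m.val < n - 1 := by
      by_contra hcon
      push_neg at hcon
      have hmval : m.val = n - 1 := le_antisymm (Nat.le_sub_one_of_lt m.isLt) hcon
      have hveq : v = Finsupp.single m (v m) := by
        ext i
        rcases eq_or_ne i m with rfl | hne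
        · simp
        · rw [Finsupp.single_apply, if_neg (fun e => hne e.symm)]
          by_contra hvi
          have hi : i ∈ v.support := Finsupp.mem_support_iff.mpr hvi
          have hle := v.support.min'_le i hi
          have : i = m := Fin.ext (le_antisymm (by omega) hle)
          exact hne this
      refine hXn (v m) ?_
      have hmfin : m = (⟨n - 1, Nat.sub_lt hn Nat.one_pos⟩ : Fin n) := Fin.ext hmval
      rw [MvPolynomial.X_pow_eq_monomial, ← hmfin, ← hveq]
      exact hvL
    have hphi : phi hn v = v - Finsupp.single m 1
        + Finsupp.single (⟨n - 1, Nat.sub_lt hn Nat.one_pos⟩ : Fin n) 1 := by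
      simp only [phi, dif_pos hsupp, hm]
    -- measure decreases
    have hwt : wt n (phi hn v + w) < N := by
      rw [← hN, wt_add, wt_add]
      have : wt n (phi hn v) < wt n v := by
        rw [hphi, wt_add, wt_single]
        simp only [Fin.val_mk, Nat.sub_self, Nat.mul_zero, add_zero]
        have := wt_sub_single v m hvm
        omega
      omega
    obtain ⟨τ, hτ, hmem'⟩ := ih (wt n (phi hn v + w)) hwt (phi hn v + w) rfl
    refine ⟨τ, hτ, ?_⟩
    have key : MvPolynomial.monomial (v + w) (1 : K)
        - MvPolynomial.monomial (phi hn v + w) (1 : K)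
        = MvPolynomial.monomial w (1 : K) * (MvPolynomial.monomial v (1 : K)
          - MvPolynomial.monomial (phi hn v) (1 : K)) := by
      rw [mul_sub, MvPolynomial.monomial_mul, MvPolynomial.monomial_mul, one_mul,
        add_comm w v, add_comm w (phi hn v)]
    have h1 : MvPolynomial.monomial (v + w) (1 : K)
        - MvPolynomial.monomial (phi hn v + w) (1 : K) ∈
        Ideal.span ((fun v => MvPolynomial.monomial v (1 : K)
          - MvPolynomial.monomial (phi hn v) (1 : K)) '' minGens L) := by
      rw [key]
      exact Ideal.mul_mem_left _ _ (Ideal.subset_span ⟨v, hv, rfl⟩)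
    have := Ideal.add_mem _ h1 hmem'
    simpa using this
  · exact ⟨σ, hσ, by rw [sub_self]; exact Ideal.zero_mem _⟩
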